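/- For every point x₂ ∈ ℝ there is an isometry of the flat Klein bottle 𝕂_{a,b} (induced by a Euclidean isometry of ℝ² normalizing the deck group Γ) taking the class of (0, x₂) to the class of (0, y) for some y ∈ [0, b/4]. -/

import Mathlib

/-- The glide reflection `(x₁,x₂) ↦ (x₁ + a/2, -x₂)` as a permutation of `ℝ²`. -/
noncomputable def glide (a : ℝ) : Equiv.Perm (ℝ × ℝ) where
  toFun p := (p.1 + a / 2, -p.2)
  invFun p := (p.1 - a / 2, -p.2)
  left_inv p := by simp
  right_inv p := by simp

/-- The vertical translation `(x₁,x₂) ↦ (x₁, x₂ + b)` as a permutation of `ℝ²`. -/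
noncomputable def vertTrans (b : ℝ) : Equiv.Perm (ℝ × ℝ) where
  toFun p := (p.1, p.2 + b)
  invFun p := (p.1, p.2 - b)
  left_inv p := by simp
  right_inv p := by simp

/-- The point reflection `(x₁,x₂) ↦ (-x₁, -x₂)`. -/
noncomputable def negPerm : Equiv.Perm (ℝ × ℝ) where
  toFun p := (-p.1, -p.2)
  invFun p := (-p.1, -p.2)
  left_inv p := by simp
  right_inv p := by simp

/-- The isometry `(x₁,x₂) ↦ (-x₁, -x₂ + b/2)` (an involution). -/
noncomputable def sigma3 (b : ℝ) : Equiv.Perm (ℝ × ℝ) where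
  toFun p := (-p.1, -p.2 + b / 2)
  invFun p := (-p.1, -p.2 + b / 2)
  left_inv p := by obtain ⟨x, y⟩ := p; simp
  right_inv p := by obtain ⟨x, y⟩ := p; simp

lemma vertTrans_zpow (b : ℝ) (m : ℤ) : ∀ p : ℝ × ℝ,
    ((vertTrans b) ^ m) p = (p.1, p.2 + m * b) := by
  induction m using Int.induction_on with
  | zero => intro p; simp [vertTrans]
  | succ k ih =>
    intro p
    rw [zpow_add_one, Equiv.Perm.mul_apply, ih]
    simp only [vertTrans, Equiv.coe_fn_mk, Prod.mk.injEq]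
    refine ⟨by trivial, ?_⟩
    push_cast
    ring
  | pred k ih =>
    intro p
    rw [zpow_sub_one, Equiv.Perm.mul_apply]
    have h : (vertTrans b)⁻¹ p = (p.1, p.2 - b) := rfl
    rw [h, ih]
    simp only [Prod.mk.injEq]
    refine ⟨by trivial, ?_⟩
    push_cast
    ring

lemma map_conj_closure_pair (σ g v : Equiv.Perm (ℝ × ℝ))
    (h1 : σ * g * σ⁻¹ ∈ Subgroup.closure {g, v})
    (h2 : σ * v * σ⁻¹ ∈ Subgroup.closure {g, v})
    (h3 : σ⁻¹ * g * σ ∈ Subgroup.closure {g, v})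
    (h4 : σ⁻¹ * v * σ ∈ Subgroup.closure {g, v}) :
    Subgroup.map (MulAut.conj σ).toMonoidHom (Subgroup.closure {g, v}) =
      Subgroup.closure {g, v} := by
  apply le_antisymm
  · rw [MonoidHom.map_closure]
    rw [Subgroup.closure_le]
    rintro x ⟨y, hy, rfl⟩
    rcases hy with rfl | rfl
    · simpa [MulAut.conj_apply] using h1
    · simpa [MulAut.conj_apply] using h2
  · rw [Subgroup.closure_le]
    rintro x (rfl | rfl)
    · exact ⟨σ⁻¹ * x * σ, h3, by simp [MulAut.conj_apply]; group⟩
    · exact ⟨σ⁻¹ * x * σ, h4, by simp [MulAut.conj_apply]; group⟩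

theorem stmt_10 (a b : ℝ) (ha : 0 < a) (hb : 0 < b) (x₂ : ℝ) :
    ∃ y ∈ Set.Icc (0 : ℝ) (b / 4), ∃ σ : Equiv.Perm (ℝ × ℝ),
      -- σ is a Euclidean isometry of ℝ²
      (∀ p q : ℝ × ℝ, ((σ p).1 - (σ q).1)^2 + ((σ p).2 - (σ q).2)^2 =
          (p.1 - q.1)^2 + (p.2 - q.2)^2) ∧
      -- σ normalizes the deck group Γ
      Subgroup.map (MulAut.conj σ).toMonoidHom (Subgroup.closure {glide a, vertTrans b}) =
        Subgroup.closure {glide a, vertTrans b} ∧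
      -- σ takes the class of (0, x₂) to the class of (0, y)
      ∃ γ ∈ Subgroup.closure {glide a, vertTrans b}, γ (σ (0, x₂)) = ((0 : ℝ), y) := by
  set H := Subgroup.closure {glide a, vertTrans b} with hH
  have hg : glide a ∈ H := Subgroup.subset_closure (by left; rfl)
  have hv : vertTrans b ∈ H := Subgroup.subset_closure (by right; rfl)
  set n : ℤ := ⌊x₂ / b⌋ with hn
  have h1 : (n : ℝ) * b ≤ x₂ := by
    have h := Int.floor_le (x₂ / b)
    have hxb : (x₂ / b) * b = x₂ := by field_simp
    nlinarith
  have h2 : x₂ < (n : ℝ) * b + b := by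
    have h := Int.lt_floor_add_one (x₂ / b)
    have hxb : (x₂ / b) * b = x₂ := by field_simp
    nlinarith
  set t : ℝ := x₂ - n * b with ht
  have ht0 : 0 ≤ t := by simp only [ht]; linarith
  have htb : t < b := by simp only [ht]; linarith
  -- conjugation facts
  have c1 : sigma3 b * glide a * (sigma3 b)⁻¹ = (vertTrans b * glide a)⁻¹ := by
    apply Equiv.ext; rintro ⟨x, y⟩
    simp only [Equiv.Perm.mul_apply, Equiv.Perm.inv_def, sigma3, glide, vertTrans,
      Equiv.coe_fn_mk, Equiv.coe_fn_symm_mk, Equiv.symm_trans_apply, Prod.mk.injEq,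
      Equiv.Perm.coe_mul, Function.comp_apply, mul_inv_rev]
    constructor <;> ring
  have c2 : sigma3 b * vertTrans b * (sigma3 b)⁻¹ = (vertTrans b)⁻¹ := by
    apply Equiv.ext; rintro ⟨x, y⟩
    simp only [Equiv.Perm.mul_apply, Equiv.Perm.inv_def, sigma3, vertTrans,
      Equiv.coe_fn_mk, Equiv.coe_fn_symm_mk, Prod.mk.injEq]
    constructor <;> ring
  have c3 : (sigma3 b)⁻¹ = sigma3 b := by
    apply Equiv.ext; rintro ⟨x, y⟩
    simp only [Equiv.Perm.inv_def, sigma3, Equiv.coe_fn_mk, Equiv.coe_fn_symm_mk]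
  have c1' : (sigma3 b)⁻¹ * glide a * sigma3 b = (vertTrans b * glide a)⁻¹ := by
    rw [c3]; rw [← c3]; exact c1
  have c2' : (sigma3 b)⁻¹ * vertTrans b * sigma3 b = (vertTrans b)⁻¹ := by
    rw [c3]; rw [← c3]; exact c2
  have d1 : vertTrans (b/2) * glide a * (vertTrans (b/2))⁻¹ = vertTrans b * glide a := by
    apply Equiv.ext; rintro ⟨x, y⟩
    simp only [Equiv.Perm.mul_apply, Equiv.Perm.inv_def, glide, vertTrans,
      Equiv.coe_fn_mk, Equiv.coe_fn_symm_mk, Prod.mk.injEq]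
    refine ⟨trivial, ?_⟩; ring
  have d2 : vertTrans (b/2) * vertTrans b * (vertTrans (b/2))⁻¹ = vertTrans b := by
    apply Equiv.ext; rintro ⟨x, y⟩
    simp only [Equiv.Perm.mul_apply, Equiv.Perm.inv_def, vertTrans,
      Equiv.coe_fn_mk, Equiv.coe_fn_symm_mk, Prod.mk.injEq]
    refine ⟨trivial, ?_⟩; ring
  have d1' : (vertTrans (b/2))⁻¹ * glide a * vertTrans (b/2) = (vertTrans b)⁻¹ * glide a := by
    apply Equiv.ext; rintro ⟨x, y⟩
    simp only [Equiv.Perm.mul_apply, Equiv.Perm.inv_def, glide, vertTrans,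
      Equiv.coe_fn_mk, Equiv.coe_fn_symm_mk, Prod.mk.injEq]
    refine ⟨trivial, ?_⟩; ring
  have d2' : (vertTrans (b/2))⁻¹ * vertTrans b * vertTrans (b/2) = vertTrans b := by
    apply Equiv.ext; rintro ⟨x, y⟩
    simp only [Equiv.Perm.mul_apply, Equiv.Perm.inv_def, vertTrans,
      Equiv.coe_fn_mk, Equiv.coe_fn_symm_mk, Prod.mk.injEq]
    refine ⟨trivial, ?_⟩; ring
  have e1 : negPerm * glide a * negPerm⁻¹ = (glide a)⁻¹ := by
    apply Equiv.ext; rintro ⟨x, y⟩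
    simp only [Equiv.Perm.mul_apply, Equiv.Perm.inv_def, negPerm, glide,
      Equiv.coe_fn_mk, Equiv.coe_fn_symm_mk, Prod.mk.injEq]
    constructor <;> ring
  have e2 : negPerm * vertTrans b * negPerm⁻¹ = (vertTrans b)⁻¹ := by
    apply Equiv.ext; rintro ⟨x, y⟩
    simp only [Equiv.Perm.mul_apply, Equiv.Perm.inv_def, negPerm, vertTrans,
      Equiv.coe_fn_mk, Equiv.coe_fn_symm_mk, Prod.mk.injEq]
    constructor <;> ring
  have e3 : negPerm⁻¹ = negPerm := by
    apply Equiv.ext; rintro ⟨x, y⟩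
    simp only [Equiv.Perm.inv_def, negPerm, Equiv.coe_fn_mk, Equiv.coe_fn_symm_mk]
  have e1' : negPerm⁻¹ * glide a * negPerm = (glide a)⁻¹ := by
    rw [e3]; rw [← e3]; exact e1
  have e2' : negPerm⁻¹ * vertTrans b * negPerm = (vertTrans b)⁻¹ := by
    rw [e3]; rw [← e3]; exact e2
  rcases le_or_gt t (b/4) with hc1 | hc1
  · -- σ = 1
    refine ⟨t, ⟨ht0, hc1⟩, 1, ?_, ?_, (vertTrans b) ^ (-n), Subgroup.zpow_mem H hv _, ?_⟩
    · intro p q; rfl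
    · apply map_conj_closure_pair <;>
        simp only [one_mul, mul_one, inv_one] <;>
        first | exact hg | exact hv
    · rw [vertTrans_zpow]
      simp only [Equiv.Perm.one_apply, Prod.mk.injEq]
      refine ⟨by trivial, ?_⟩
      simp only [ht]
      push_cast
      ring
  · rcases le_or_gt t (b/2) with hc2 | hc2
    · -- σ = sigma3 b, y = b/2 - t
      refine ⟨b/2 - t, ⟨by linarith, by linarith⟩, sigma3 b, ?_, ?_,
        (vertTrans b) ^ n, Subgroup.zpow_mem H hv _, ?_⟩
      · intro p q; simp only [sigma3, Equiv.coe_fn_mk]; ring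
      · apply map_conj_closure_pair
        · rw [c1]; exact inv_mem (mul_mem hv hg)
        · rw [c2]; exact inv_mem hv
        · rw [c1']; exact inv_mem (mul_mem hv hg)
        · rw [c2']; exact inv_mem hv
      · rw [vertTrans_zpow]
        simp only [sigma3, Equiv.coe_fn_mk, Prod.mk.injEq, ht]
        constructor
        · ring
        · ring
    · rcases le_or_gt t (3*b/4) with hc3 | hc3
      · -- σ = vertTrans (b/2), y = t - b/2
        refine ⟨t - b/2, ⟨by linarith, by linarith⟩, vertTrans (b/2), ?_, ?_,
          (vertTrans b) ^ (-(n+1)), Subgroup.zpow_mem H hv _, ?_⟩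
        · intro p q; simp only [vertTrans, Equiv.coe_fn_mk]; ring
        · apply map_conj_closure_pair
          · rw [d1]; exact mul_mem hv hg
          · rw [d2]; exact hv
          · rw [d1']; exact mul_mem (inv_mem hv) hg
          · rw [d2']; exact hv
        · rw [vertTrans_zpow]
          simp only [vertTrans, Equiv.coe_fn_mk, Prod.mk.injEq, ht]
          refine ⟨by trivial, ?_⟩
          push_cast
          ring
      · -- σ = negPerm, y = b - t
        refine ⟨b - t, ⟨by linarith, by linarith⟩, negPerm, ?_, ?_,
          (vertTrans b) ^ (n+1), Subgroup.zpow_mem H hv _, ?_⟩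
        · intro p q; simp only [negPerm, Equiv.coe_fn_mk]; ring
        · apply map_conj_closure_pair
          · rw [e1]; exact inv_mem hg
          · rw [e2]; exact inv_mem hv
          · rw [e1']; exact inv_mem hg
          · rw [e2']; exact inv_mem hv
        · rw [vertTrans_zpow]
          simp only [negPerm, Equiv.coe_fn_mk, Prod.mk.injEq, ht]
          constructor
          · ring
          · push_cast
            ring
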